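/- Let N ≥ 1 and let a₁, …, a_N ∈ ℝ⁴, writing a_k = (a_k⁰, a_k¹, a_k², a_k³). Let M ≥ 0, κ > 0 and δ > 0 and assume: (i) a_k⁰ > 0 for every k; (ii) |a_k^j| ≤ M·a_k⁰ for every k and every j ∈ {1,2,3}; (iii) |Σ_{k=1}^N a_k^i·a_k^j − δ^{ij}| ≤ κ for all i, j ∈ {0,1,2,3}, where δ^{ij} is the Kronecker delta; (iv) 100·(M+1)·(κ+δ) ≤ 1. Then for every w = (w⁰, w¹, w², w³) ∈ ℝ⁴ with w⁰ = 1 and |w^j| ≤ δ for j = 1,2,3, there exists ω ∈ ℝ⁴ such that the numbers x_k := ⟨a_k, ω⟩ satisfy x_k > 0 for every k and Σ_{k=1}^N a_k^i·x_k = w^i for every i ∈ {0,1,2,3}. -/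
import Mathlib

set_option maxHeartbeats 1000000


/-- **Finite-dimensional solvability with positivity** (abstract mesh argument,
Section 1.4 of the paper). Given vectors `a₁, …, a_N ∈ ℝ⁴` with positive `0`-th
components, controlled remaining components, and Gram matrix `κ`-close to the
identity, every moment vector `w` with `w⁰ = 1` and `|wʲ| ≤ δ` (`j = 1,2,3`) is
realized by positive coefficients `x_k = ⟨a_k, ω⟩` for some `ω ∈ ℝ⁴`. -/
theorem moment_problem_positive_solvability
    (N : ℕ) (hN : 1 ≤ N) (a : Fin N → Fin 4 → ℝ)
    (M κ δ : ℝ) (hM : 0 ≤ M) (hκ : 0 < κ) (hδ : 0 < δ)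
    (hpos : ∀ k, 0 < a k 0)
    (hcomp : ∀ k, ∀ j : Fin 4, j ≠ 0 → |a k j| ≤ M * a k 0)
    (hgram : ∀ i j : Fin 4,
      |(∑ k, a k i * a k j) - (if i = j then 1 else 0)| ≤ κ)
    (hsmall : 100 * (M + 1) * (κ + δ) ≤ 1) :
    ∀ w : Fin 4 → ℝ, w 0 = 1 → (∀ j : Fin 4, j ≠ 0 → |w j| ≤ δ) →
      ∃ ω : Fin 4 → ℝ,
        (∀ k, 0 < ∑ j, a k j * ω j) ∧
        (∀ i : Fin 4, (∑ k, a k i * (∑ j, a k j * ω j)) = w i) := by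
  intro w hw0 hwj
  have hκ1 : κ ≤ 1/100 := by nlinarith
  have hδ1 : δ ≤ 1/100 := by nlinarith
  set G : Matrix (Fin 4) (Fin 4) ℝ := Matrix.of (fun i j => ∑ k, a k i * a k j) with hGdef
  have hGapp : ∀ i j, G i j = ∑ k, a k i * a k j := fun i j => rfl
  set E : Fin 4 → Fin 4 → ℝ := fun i j => G i j - (if i = j then 1 else 0) with hEdef
  have hEκ : ∀ i j, |E i j| ≤ κ := fun i j => hgram i j
  -- quadratic form lower bound
  have quad : ∀ v : Fin 4 → ℝ,
      (1 - 4*κ) * (∑ i, (v i)^2) ≤ ∑ i, v i * (G.mulVec v i) := by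
    intro v
    have hsplit : (∑ i, v i * (G.mulVec v i))
        = (∑ i, (v i)^2) + ∑ i, ∑ j, v i * v j * E i j := by
      simp only [Matrix.mulVec, dotProduct, hEdef]
      simp [Fin.sum_univ_four]
      ring
    have herr : |∑ i, ∑ j, v i * v j * E i j| ≤ κ * (∑ i, |v i|)^2 := by
      calc |∑ i, ∑ j, v i * v j * E i j|
          ≤ ∑ i, |∑ j, v i * v j * E i j| := Finset.abs_sum_le_sum_abs _ _
        _ ≤ ∑ i, ∑ j, |v i * v j * E i j| :=
            Finset.sum_le_sum fun i _ => Finset.abs_sum_le_sum_abs _ _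
        _ ≤ ∑ i : Fin 4, ∑ j : Fin 4, |v i| * |v j| * κ := by
            refine Finset.sum_le_sum fun i _ => Finset.sum_le_sum fun j _ => ?_
            rw [abs_mul, abs_mul]
            have h1 : (0:ℝ) ≤ |v i| * |v j| := by positivity
            exact mul_le_mul_of_nonneg_left (hEκ i j) h1
        _ = κ * (∑ i, |v i|)^2 := by
            rw [sq, Finset.sum_mul_sum, Finset.mul_sum]
            refine Finset.sum_congr rfl fun i _ => ?_
            rw [Finset.mul_sum]
            exact Finset.sum_congr rfl fun j _ => by ring
    have hcs : (∑ i, |v i|)^2 ≤ 4 * ∑ i, (v i)^2 := by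
      simp only [Fin.sum_univ_four]
      nlinarith [sq_nonneg (|v 0| - |v 1|), sq_nonneg (|v 0| - |v 2|),
        sq_nonneg (|v 0| - |v 3|), sq_nonneg (|v 1| - |v 2|),
        sq_nonneg (|v 1| - |v 3|), sq_nonneg (|v 2| - |v 3|),
        sq_abs (v 0), sq_abs (v 1), sq_abs (v 2), sq_abs (v 3)]
    have h1 := abs_le.mp herr
    nlinarith [h1.1, hsplit, hcs, hκ.le]
  -- injectivity of mulVec
  have hker : ∀ v : Fin 4 → ℝ, G.mulVecLin v = 0 → v = 0 := by
    intro v hv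
    have hv' : G.mulVec v = 0 := hv
    have hz : (∑ i, v i * (G.mulVec v i)) = 0 := by
      rw [hv']; simp
    have hq := quad v
    rw [hz] at hq
    have hκ' : (0:ℝ) < 1 - 4*κ := by linarith
    have hsum : (∑ i, (v i)^2) ≤ 0 := by nlinarith
    have hsum0 : (∑ i, (v i)^2) = 0 :=
      le_antisymm hsum (Finset.sum_nonneg fun i _ => sq_nonneg _)
    funext i
    have := (Finset.sum_eq_zero_iff_of_nonneg (fun i _ => sq_nonneg (v i))).mp hsum0
      i (Finset.mem_univ i)
    exact pow_eq_zero_iff (n := 2) (by norm_num) |>.mp this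
  have hinj : Function.Injective G.mulVecLin :=
    LinearMap.ker_eq_bot.mp (LinearMap.ker_eq_bot'.mpr hker)
  have hsurj : Function.Surjective G.mulVecLin :=
    LinearMap.injective_iff_surjective.mp hinj
  obtain ⟨ω, hω⟩ := hsurj w
  have hGω : ∀ i, ∑ j, G i j * ω j = w i := by
    intro i
    have := congrFun hω i
    simpa [Matrix.mulVecLin_apply, Matrix.mulVec, dotProduct] using this
  -- componentwise bounds
  have hωi : ∀ i, ω i = w i - ∑ j, E i j * ω j := by
    intro i
    have h := hGω i
    have hsp : ∑ j, G i j * ω j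
        = (∑ j, (if i = j then 1 else 0) * ω j) + ∑ j, E i j * ω j := by
      rw [← Finset.sum_add_distrib]
      exact Finset.sum_congr rfl fun j _ => by simp only [hEdef]; ring
    have hd : (∑ j, (if i = j then (1:ℝ) else 0) * ω j) = ω i := by
      simp
    rw [hsp, hd] at h
    linarith
  set T : ℝ := ∑ j, |ω j| with hTdef
  have hT0 : 0 ≤ T := Finset.sum_nonneg fun j _ => abs_nonneg _
  have hnear : ∀ i, |ω i - w i| ≤ κ * T := by
    intro i
    have h := hωi i
    have : ω i - w i = -(∑ j, E i j * ω j) := by rw [h]; ring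
    rw [this, abs_neg]
    calc |∑ j, E i j * ω j| ≤ ∑ j, |E i j * ω j| := Finset.abs_sum_le_sum_abs _ _
      _ ≤ ∑ j, κ * |ω j| := by
          refine Finset.sum_le_sum fun j _ => ?_
          rw [abs_mul]
          exact mul_le_mul_of_nonneg_right (hEκ i j) (abs_nonneg _)
      _ = κ * T := by rw [hTdef, Finset.mul_sum]
  have hw1 : |w 1| ≤ δ := hwj 1 (by decide)
  have hw2 : |w 2| ≤ δ := hwj 2 (by decide)
  have hw3 : |w 3| ≤ δ := hwj 3 (by decide)
  have hTle : T ≤ 2 := by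
    have e0 := abs_sub_abs_le_abs_sub (ω 0) (w 0)
    have e1 := abs_sub_abs_le_abs_sub (ω 1) (w 1)
    have e2 := abs_sub_abs_le_abs_sub (ω 2) (w 2)
    have e3 := abs_sub_abs_le_abs_sub (ω 3) (w 3)
    have n0 := hnear 0; have n1 := hnear 1; have n2 := hnear 2; have n3 := hnear 3
    have hTsum : T = |ω 0| + |ω 1| + |ω 2| + |ω 3| := by
      rw [hTdef, Fin.sum_univ_four]
    have habs0 : |w 0| = 1 := by rw [hw0]; norm_num
    have hκT : κ * T ≤ (1/100) * T := mul_le_mul_of_nonneg_right hκ1 hT0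
    linarith [e0, e1, e2, e3, n0, n1, n2, n3, hTsum, habs0, hκT, hw1, hw2, hw3, hδ1]
  have hκT2 : κ * T ≤ 2 * κ := by
    have := mul_le_mul_of_nonneg_left hTle hκ.le
    linarith
  have hω0 : 1 - 2*κ ≤ ω 0 := by
    have := (abs_le.mp (hnear 0)).1
    rw [hw0] at this
    linarith
  have hωsmall : ∀ j : Fin 4, j ≠ 0 → |ω j| ≤ δ + 2*κ := by
    intro j hj
    have h1 := abs_sub_abs_le_abs_sub (ω j) (w j)
    have h2 := hnear j
    have h3 := hwj j hj
    linarith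
  refine ⟨ω, ?_, ?_⟩
  · intro k
    have b1 : |a k 1 * ω 1| ≤ (M * a k 0) * (δ + 2*κ) := by
      rw [abs_mul]
      exact mul_le_mul (hcomp k 1 (by decide)) (hωsmall 1 (by decide))
        (abs_nonneg _) (mul_nonneg hM (hpos k).le)
    have b2 : |a k 2 * ω 2| ≤ (M * a k 0) * (δ + 2*κ) := by
      rw [abs_mul]
      exact mul_le_mul (hcomp k 2 (by decide)) (hωsmall 2 (by decide))
        (abs_nonneg _) (mul_nonneg hM (hpos k).le)
    have b3 : |a k 3 * ω 3| ≤ (M * a k 0) * (δ + 2*κ) := by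
      rw [abs_mul]
      exact mul_le_mul (hcomp k 3 (by decide)) (hωsmall 3 (by decide))
        (abs_nonneg _) (mul_nonneg hM (hpos k).le)
    have n1 := neg_abs_le (a k 1 * ω 1)
    have n2 := neg_abs_le (a k 2 * ω 2)
    have n3 := neg_abs_le (a k 3 * ω 3)
    have hA : a k 0 * (1 - 2*κ) ≤ a k 0 * ω 0 :=
      mul_le_mul_of_nonneg_left hω0 (hpos k).le
    have hc : (0:ℝ) < 1 - 2*κ - 3*M*(δ + 2*κ) := by nlinarith
    have hB : 0 < a k 0 * (1 - 2*κ - 3*M*(δ + 2*κ)) := mul_pos (hpos k) hc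
    rw [Fin.sum_univ_four]
    nlinarith [hA, hB, b1, b2, b3, n1, n2, n3]
  · intro i
    have hswap : (∑ k, a k i * ∑ j, a k j * ω j) = ∑ j, G i j * ω j := by
      calc (∑ k, a k i * ∑ j, a k j * ω j)
          = ∑ k, ∑ j, a k i * (a k j * ω j) := by
            exact Finset.sum_congr rfl fun k _ => Finset.mul_sum _ _ _
        _ = ∑ j, ∑ k, a k i * (a k j * ω j) := Finset.sum_comm
        _ = ∑ j, G i j * ω j := by
            refine Finset.sum_congr rfl fun j _ => ?_
            rw [hGapp, Finset.sum_mul]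
            exact Finset.sum_congr rfl fun k _ => by ring
    rw [hswap, hGω]
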